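/- arXiv:1910.03494 — 6 statements merged into one kernel-verified Lean document; each statement's English description precedes it below -/
import Mathlib

section
/- Let A be an integral domain and let a, b ∈ A be nonzero elements that are relatively prime, meaning aA ∩ bA = abA. Then aX - b is a prime element of the polynomial ring A[X]. -/
open Polynomial

/-- If `a, b` are nonzero relatively prime elements of an integral domain `A`
(meaning `aA ∩ bA = abA`), then `aX - b` is a prime element of `A[X]`. -/
theorem stmt_4 (A : Type*) [CommRing A] [IsDomain A] (a b : A) (ha : a ≠ 0) (hb : b ≠ 0)
    (hrp : Ideal.span {a} ⊓ Ideal.span {b} = Ideal.span {a * b}) :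
    Prime (C a * X - C b : A[X]) := by
  -- `b` is regular modulo `aA`
  have hreg : ∀ t : A, a ∣ b * t → a ∣ t := by
    intro t ht
    have h1 : b * t ∈ Ideal.span {a} ⊓ Ideal.span {b} :=
      ⟨Ideal.mem_span_singleton.mpr ht, Ideal.mem_span_singleton.mpr (dvd_mul_right b t)⟩
    rw [hrp, Ideal.mem_span_singleton] at h1
    obtain ⟨s, hs⟩ := h1
    refine ⟨s, mul_left_cancel₀ hb ?_⟩
    rw [hs]; ring
  have hregpow : ∀ (m : ℕ) (t : A), a ∣ b ^ m * t → a ∣ t := by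
    intro m
    induction m with
    | zero => intro t ht; simpa using ht
    | succ n ih =>
      intro t ht
      exact ih t (hreg _ (by rwa [pow_succ, mul_comm (b ^ n) b, mul_assoc] at ht))
  set K := FractionRing A
  set φ : A →+* K := algebraMap A K with hφ
  have hinj : Function.Injective φ := IsFractionRing.injective A K
  have hφa : φ a ≠ 0 := fun h => ha (hinj (by simpa using h))
  -- key: an element of K with `a•x ∈ A` and `bᵐ•x ∈ A` lies in `A`
  have key : ∀ (x : K) (m : ℕ), (φ a * x ∈ Set.range φ) → (φ b ^ m * x ∈ Set.range φ) →
      x ∈ Set.range φ := by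
    rintro x m ⟨t, htx⟩ ⟨u, hux⟩
    have h1 : φ (b ^ m * t) = φ (a * u) := by
      rw [map_mul, map_mul, map_pow, htx, hux]; ring
    have h2 : a ∣ t := hregpow m t ⟨u, hinj h1⟩
    obtain ⟨s, hs⟩ := h2
    refine ⟨s, mul_left_cancel₀ hφa ?_⟩
    rw [← map_mul, ← hs, htx]
  -- main lemma: divisibility descends from K[X] to A[X]
  have main : ∀ f : A[X], (C (φ a) * X - C (φ b)) ∣ f.map φ → (C a * X - C b) ∣ f := by
    rintro f ⟨h, hh⟩
    have hc : ∀ i : ℕ, (f.map φ).coeff (i + 1) = φ a * h.coeff i - φ b * h.coeff (i + 1) := by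
      intro i
      rw [hh, sub_mul, coeff_sub, mul_assoc, coeff_C_mul, coeff_X_mul, coeff_C_mul]
    have hc0 : (f.map φ).coeff 0 = -(φ b * h.coeff 0) := by
      rw [hh]
      simp [sub_mul, coeff_sub, coeff_C_mul, mul_assoc, mul_coeff_zero]
    have hbot : ∀ i : ℕ, φ b ^ (i + 1) * h.coeff i ∈ Set.range φ := by
      intro i
      induction i with
      | zero =>
        refine ⟨-(f.coeff 0), ?_⟩
        rw [map_neg, ← coeff_map, hc0, pow_one, neg_neg]
      | succ n ih =>
        obtain ⟨u, hu⟩ := ih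
        refine ⟨a * u - b ^ (n + 1) * f.coeff (n + 1), ?_⟩
        have h2 : φ b * h.coeff (n + 1) = φ a * h.coeff n - φ (f.coeff (n + 1)) := by
          rw [← coeff_map, hc n]; ring
        have e : φ b ^ (n + 1 + 1) * h.coeff (n + 1)
            = φ b ^ (n + 1) * (φ b * h.coeff (n + 1)) := by ring
        rw [e, h2, map_sub, map_mul, map_mul, map_pow, hu]
        ring
    have htop : ∀ j i : ℕ, h.natDegree < i + j → h.coeff i ∈ Set.range φ := by
      intro j
      induction j with
      | zero =>
        intro i hi
        rw [coeff_eq_zero_of_natDegree_lt (by omega)]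
        exact ⟨0, map_zero φ⟩
      | succ n ih =>
        intro i hi
        obtain ⟨s, hs⟩ := ih (i + 1) (by omega)
        have hax : φ a * h.coeff i ∈ Set.range φ := by
          refine ⟨f.coeff (i + 1) + b * s, ?_⟩
          rw [map_add, map_mul, hs, ← coeff_map, hc i]
          ring
        exact key _ (i + 1) hax (hbot i)
    have hl : h ∈ Polynomial.lifts φ := by
      rw [lifts_iff_coeff_lifts]
      intro n
      exact htop (h.natDegree + 1) n (by omega)
    obtain ⟨h', hh'⟩ := (mem_lifts _).mp hl
    refine ⟨h', Polynomial.map_injective φ hinj ?_⟩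
    rw [Polynomial.map_mul, hh', hh]
    congr 1
    simp
  -- the image polynomial is prime in K[X]
  have hq : Prime (C (φ a) * X - C (φ b) : K[X]) := by
    have hu : IsUnit (C (φ a) : K[X]) := isUnit_C.mpr (isUnit_iff_ne_zero.mpr hφa)
    have heq : (C (φ a) * X - C (φ b) : K[X]) = C (φ a) * (X - C (φ b / φ a)) := by
      rw [mul_sub, ← C_mul, mul_div_cancel₀ _ hφa]
    rw [heq]
    have hassoc : Associated (X - C (φ b / φ a) : K[X]) (C (φ a) * (X - C (φ b / φ a))) :=
      ⟨hu.unit, by rw [mul_comm, hu.unit_spec]⟩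
    exact hassoc.prime (prime_X_sub_C _)
  have hd1 : (C a * X - C b : A[X]).natDegree = 1 := by
    rw [sub_eq_add_neg, ← C_neg]
    exact natDegree_linear ha
  refine ⟨?_, ?_, ?_⟩
  · intro h0
    rw [h0] at hd1
    simp at hd1
  · intro hu
    have h0 := natDegree_eq_zero_of_isUnit hu
    rw [hd1] at h0
    exact one_ne_zero h0
  · intro f g hfg
    have hmapq : (C a * X - C b : A[X]).map φ = C (φ a) * X - C (φ b) := by simp
    have hdvd : (C (φ a) * X - C (φ b)) ∣ f.map φ * g.map φ := by
      obtain ⟨d, hd⟩ := hfg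
      exact ⟨d.map φ, by rw [← Polynomial.map_mul, hd, Polynomial.map_mul, hmapq]⟩
    rcases hq.2.2 _ _ hdvd with h1 | h1
    · exact Or.inl (main f h1)
    · exact Or.inr (main g h1)
end

section
/- Let A = k[x,y] be a polynomial ring in two variables over a field k, and let a, b ∈ A be nonzero elements such that aA is a prime ideal, aA ∩ bA = abA, and aA + bA is a prime ideal. Then the ring B = A[X]/(aX - b) is a unique factorization domain. -/
set_option maxHeartbeats 1000000


open Polynomial

section Nagata

variable {R B : Type*} [CommRing R] [IsDomain R] [UniqueFactorizationMonoid R]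
  [CommRing B] [IsDomain B] [WfDvdMonoid B]

/-- Nagata's lemma, in the form needed here: if `μ : R → B` is an injective ring hom
from a UFD such that `μ a` is prime and every element of `B` becomes an element of the
image of `μ` after multiplying by a power of `μ a`, then `B` is a UFD. -/
theorem nagata_aux (μ : R →+* B) (hinj : Function.Injective μ) (a : R) (hpa : Prime a)
    (hpA : Prime (μ a)) (F3 : ∀ z : B, ∃ (n : ℕ) (m : R), (μ a) ^ n * z = μ m) :
    UniqueFactorizationMonoid B := by
  have hp0ne : μ a ≠ 0 := hpA.ne_zero
  have hp0nu : ¬IsUnit (μ a) := hpA.not_unit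
  have hμne : ∀ {m : R}, m ≠ 0 → μ m ≠ 0 := by
    intro m hm h
    exact hm (hinj (by rw [h, map_zero]))
  -- stripping powers of `μ a`
  have strip : ∀ (t : ℕ) (r y : B), ¬ μ a ∣ r → r ∣ (μ a) ^ t * y → r ∣ y := by
    intro t
    induction t with
    | zero => intro r y _ h; simpa using h
    | succ t ih =>
      intro r y hr h
      obtain ⟨s, hs⟩ := h
      have hdvd : μ a ∣ r * s := ⟨(μ a) ^ t * y, by rw [← hs]; ring⟩
      rcases hpA.2.2 r s hdvd with h1 | h2
      · exact absurd h1 hr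
      · obtain ⟨s', rfl⟩ := h2
        apply ih r y hr
        refine ⟨s', ?_⟩
        have hc : μ a * ((μ a) ^ t * y) = μ a * (r * s') := by
          linear_combination hs
        exact mul_left_cancel₀ hp0ne hc
  -- the key primality transfer
  have crux : ∀ (q : R), Prime q → ¬ q ∣ a → ∀ (e : ℕ) (r : B), ¬ μ a ∣ r →
      μ q = (μ a) ^ e * r → Prime r := by
    intro q hq hqa e r hr hqr
    refine ⟨?_, ?_, ?_⟩
    · intro h0
      exact hμne hq.ne_zero (by rw [hqr, h0, mul_zero])
    · intro hu
      obtain ⟨w, hw⟩ := hu.exists_right_inv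
      obtain ⟨n, m, hnm⟩ := F3 w
      have hEq : μ (q * m) = μ (a ^ (e + n)) := by
        rw [map_mul, map_pow, ← hnm, hqr, pow_add]
        linear_combination ((μ a) ^ e * (μ a) ^ n) * hw
      have heq := hinj hEq
      exact hqa (hq.dvd_of_dvd_pow (⟨m, heq.symm⟩ : q ∣ a ^ (e + n)))
    · intro z w hzw
      obtain ⟨s, hs⟩ := hzw
      obtain ⟨α, m₁, h₁⟩ := F3 z
      obtain ⟨β, m₂, h₂⟩ := F3 w
      obtain ⟨γ, m₃, h₃⟩ := F3 s
      have key : μ (a ^ (e + γ) * (m₁ * m₂)) = μ (a ^ (α + β) * (q * m₃)) := by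
        simp only [map_mul, map_pow, ← h₁, ← h₂, ← h₃, hqr, pow_add]
        linear_combination ((μ a) ^ e * (μ a) ^ γ * (μ a) ^ α * (μ a) ^ β) * hs
      have keyA : a ^ (e + γ) * (m₁ * m₂) = a ^ (α + β) * (q * m₃) := hinj key
      have hq1 : q ∣ m₁ * m₂ := by
        have hqd : q ∣ a ^ (e + γ) * (m₁ * m₂) := ⟨a ^ (α + β) * m₃, by rw [keyA]; ring⟩
        rcases hq.2.2 _ _ hqd with h | h
        · exact absurd (hq.dvd_of_dvd_pow h) hqa
        · exact h
      rcases hq.2.2 _ _ hq1 with h | h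
      · left
        obtain ⟨m₁', rfl⟩ := h
        have hdvd : r ∣ (μ a) ^ α * z :=
          ⟨(μ a) ^ e * μ m₁', by rw [h₁, map_mul, hqr]; ring⟩
        exact strip α r z hr hdvd
      · right
        obtain ⟨m₂', rfl⟩ := h
        have hdvd : r ∣ (μ a) ^ β * w :=
          ⟨(μ a) ^ e * μ m₂', by rw [h₂, map_mul, hqr]; ring⟩
        exact strip β r w hr hdvd
  -- decomposition of images of primes of R
  have decomp : ∀ q : R, Prime q → ∃ (e : ℕ) (r : B),
      (Prime r ∨ IsUnit r) ∧ ¬ μ a ∣ r ∧ μ q = (μ a) ^ e * r := by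
    intro q hq
    by_cases hqa : q ∣ a
    · have hassoc : Associated q a := hq.associated_of_dvd hpa hqa
      obtain ⟨u, hu⟩ := hassoc
      have hru : IsUnit (μ ((u⁻¹ : Rˣ) : R)) := (Units.isUnit u⁻¹).map μ
      refine ⟨1, μ ((u⁻¹ : Rˣ) : R), Or.inr hru, ?_, ?_⟩
      · intro hdvd; exact hp0nu (isUnit_of_dvd_unit hdvd hru)
      · have hq' : q = a * ((u⁻¹ : Rˣ) : R) := by
          rw [← hu, mul_assoc, Units.mul_inv, mul_one]
        rw [hq', map_mul, pow_one]
    · obtain ⟨e, r, hr, hqr⟩ := WfDvdMonoid.max_power_factor' (hμne hq.ne_zero) hp0nu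
      exact ⟨e, r, Or.inl (crux q hq hqa e r hr hqr), hr, hqr⟩
  -- processing multisets of primes of R
  have msets : ∀ f : Multiset R, (∀ p ∈ f, Prime p) → ∃ (E : ℕ) (g : Multiset B) (U : B),
      IsUnit U ∧ (∀ s ∈ g, Prime s) ∧ ¬ μ a ∣ U * g.prod ∧
      μ f.prod = (μ a) ^ E * (U * g.prod) := by
    intro f
    refine Multiset.induction_on f ?_ ?_
    · intro _
      refine ⟨0, 0, 1, isUnit_one, by simp, ?_, by simp⟩
      intro h
      exact hp0nu (isUnit_of_dvd_one (by simpa using h))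
    · intro p f ih hpf
      obtain ⟨E, g, U, hU, hg, hnd, heq⟩ := ih (fun x hx => hpf x (Multiset.mem_cons_of_mem hx))
      obtain ⟨e, r, hr, hra, hqr⟩ := decomp p (hpf p (Multiset.mem_cons_self p f))
      rcases hr with hrP | hrU
      · refine ⟨e + E, r ::ₘ g, U, hU, ?_, ?_, ?_⟩
        · intro s hs
          rcases Multiset.mem_cons.mp hs with rfl | hs
          · exact hrP
          · exact hg s hs
        · rw [Multiset.prod_cons]
          intro hdvd
          have hdvd' : μ a ∣ r * (U * g.prod) := by
            rwa [show U * (r * g.prod) = r * (U * g.prod) by ring] at hdvd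
          rcases hpA.2.2 _ _ hdvd' with h | h
          · exact hra h
          · exact hnd h
        · rw [Multiset.prod_cons, map_mul, heq, hqr, Multiset.prod_cons, pow_add]; ring
      · refine ⟨e + E, g, U * r, hU.mul hrU, hg, ?_, ?_⟩
        · intro hdvd
          have hdvd' : μ a ∣ r * (U * g.prod) := by
            rwa [show U * r * g.prod = r * (U * g.prod) by ring] at hdvd
          rcases hpA.2.2 _ _ hdvd' with h | h
          · exact absurd h hra
          · exact hnd h
        · rw [Multiset.prod_cons, map_mul, heq, hqr, pow_add]; ring
  -- conclusion
  apply UniqueFactorizationMonoid.of_exists_prime_factors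
  intro z hz
  obtain ⟨n, m, hnm⟩ := F3 z
  have hm : m ≠ 0 := by
    rintro rfl
    rw [map_zero] at hnm
    rcases mul_eq_zero.mp hnm with h | h
    · exact pow_ne_zero n hp0ne h
    · exact hz h
  obtain ⟨fR, hfR, hassoc⟩ := UniqueFactorizationMonoid.exists_prime_factors m hm
  obtain ⟨v, hv⟩ := hassoc
  obtain ⟨E, g, U, hU, hg, hnd, heq⟩ := msets fR hfR
  have hU'u : IsUnit (U * μ ((v : Rˣ) : R)) := hU.mul ((v.isUnit).map μ)
  have hnd' : ¬ μ a ∣ (U * μ ((v : Rˣ) : R)) * g.prod := by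
    intro h
    have h' : μ a ∣ μ ((v : Rˣ) : R) * (U * g.prod) := by
      rwa [show U * μ ((v : Rˣ) : R) * g.prod = μ ((v : Rˣ) : R) * (U * g.prod) by ring] at h
    rcases hpA.2.2 _ _ h' with h'' | h''
    · exact hp0nu (isUnit_of_dvd_unit h'' ((v.isUnit).map μ))
    · exact hnd h''
  have hmain : (μ a) ^ n * z = (μ a) ^ E * ((U * μ ((v : Rˣ) : R)) * g.prod) := by
    rw [hnm, ← hv, map_mul, heq]; ring
  have hnE : n ≤ E := by
    by_contra hlt
    push_neg at hlt
    obtain ⟨d, hd⟩ : ∃ d, n = E + (d + 1) := ⟨n - E - 1, by omega⟩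
    rw [hd, pow_add] at hmain
    have hcan : (μ a) ^ (d + 1) * z = (U * μ ((v : Rˣ) : R)) * g.prod :=
      mul_left_cancel₀ (pow_ne_zero E hp0ne) (by linear_combination hmain)
    exact hnd' ⟨(μ a) ^ d * z, by rw [← hcan]; ring⟩
  obtain ⟨d, rfl⟩ : ∃ d, E = n + d := ⟨E - n, by omega⟩
  rw [pow_add] at hmain
  have hz' : z = (μ a) ^ d * ((U * μ ((v : Rˣ) : R)) * g.prod) :=
    mul_left_cancel₀ (pow_ne_zero n hp0ne) (by linear_combination hmain)
  refine ⟨Multiset.replicate d (μ a) + g, ?_, ?_⟩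
  · intro b hb
    rcases Multiset.mem_add.mp hb with hb | hb
    · rw [Multiset.eq_of_mem_replicate hb]; exact hpA
    · exact hg b hb
  · rw [Multiset.prod_add, Multiset.prod_replicate]
    obtain ⟨u, hu⟩ := hU'u
    exact ⟨u, by rw [hu, hz']; ring⟩

end Nagata

/-- Samuel's criterion for a general UFD. -/
theorem samuel_aux {A : Type*} [CommRing A] [IsDomain A] [UniqueFactorizationMonoid A]
    [IsNoetherianRing A]
    (a b : A) (ha : a ≠ 0) (hb : b ≠ 0) (hpa : Prime a)
    (hcop : ∀ c : A, c ∣ a → c ∣ b → IsUnit c)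
    (habprime : (Ideal.span {a} ⊔ Ideal.span {b}).IsPrime) :
    ∃ h : IsDomain (A[X] ⧸ (Ideal.span {C a * X - C b} : Ideal A[X])),
      UniqueFactorizationMonoid (A[X] ⧸ (Ideal.span {C a * X - C b} : Ideal A[X])) := by
  classical
  set g : A[X] := C a * X - C b with hg
  have hgdeg : g.degree = 1 := by
    rw [hg, sub_eq_add_neg, ← map_neg C b]
    exact degree_linear ha
  have hgne : g ≠ 0 := fun h => by simp [h] at hgdeg
  have hgprim : g.IsPrimitive := by
    intro r hr
    have hcoeff := (Polynomial.C_dvd_iff_dvd_coeff r g).mp hr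
    have h1 : r ∣ a := by
      have := hcoeff 1
      simpa [hg, coeff_sub, coeff_C] using this
    have h0 : r ∣ b := by
      have := hcoeff 0
      rw [hg] at this
      simp only [coeff_sub, mul_coeff_zero, coeff_X_zero, mul_zero, coeff_C_zero, zero_sub,
        dvd_neg] at this
      exact this
    exact hcop r h1 h0
  letI := UniqueFactorizationMonoid.normalizationMonoid (α := A)
  letI := UniqueFactorizationMonoid.toNormalizedGCDMonoid A
  have hK : Irreducible (g.map (algebraMap A (FractionRing A))) := by
    have hma : algebraMap A (FractionRing A) a ≠ 0 := fun h =>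
      ha (IsFractionRing.injective A (FractionRing A) (by rw [h, map_zero]))
    apply Polynomial.irreducible_of_degree_eq_one
    have hmg : g.map (algebraMap A (FractionRing A)) =
        C (algebraMap A (FractionRing A) a) * X + C (-(algebraMap A (FractionRing A) b)) := by
      rw [hg]
      simp [Polynomial.map_sub, Polynomial.map_mul, sub_eq_add_neg]
    rw [hmg]
    exact degree_linear hma
  have hgirr : Irreducible g :=
    (hgprim.irreducible_iff_irreducible_map_fraction_map (K := FractionRing A)).mpr hK
  have hgprime : Prime g := UniqueFactorizationMonoid.irreducible_iff_prime.mp hgirr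
  haveI hIg : (Ideal.span ({g} : Set A[X])).IsPrime :=
    (Ideal.span_singleton_prime hgne).mpr hgprime
  haveI hdom : IsDomain (A[X] ⧸ Ideal.span ({g} : Set A[X])) :=
    (Ideal.Quotient.isDomain_iff_prime _).mpr hIg
  haveI : IsNoetherianRing (A[X] ⧸ Ideal.span ({g} : Set A[X])) :=
    isNoetherianRing_of_surjective _ _ _ Ideal.Quotient.mk_surjective
  haveI : WfDvdMonoid (A[X] ⧸ Ideal.span ({g} : Set A[X])) := IsNoetherianRing.wfDvdMonoid
  set μ : A →+* (A[X] ⧸ Ideal.span ({g} : Set A[X])) :=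
    (Ideal.Quotient.mk (Ideal.span ({g} : Set A[X]))).comp (C : A →+* A[X]) with hμ
  have hinj : Function.Injective μ := by
    intro m₁ m₂ h
    by_contra hne
    have hsub : (Ideal.Quotient.mk (Ideal.span ({g} : Set A[X]))) (C (m₁ - m₂)) = 0 := by
      rw [map_sub, map_sub, sub_eq_zero]
      exact h
    rw [Ideal.Quotient.eq_zero_iff_mem, Ideal.mem_span_singleton] at hsub
    have hCne : (C (m₁ - m₂) : A[X]) ≠ 0 := fun h0 =>
      hne (sub_eq_zero.mp (Polynomial.C_eq_zero.mp h0))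
    have hle := Polynomial.degree_le_of_dvd hsub hCne
    rw [hgdeg, degree_C (sub_ne_zero.mpr hne)] at hle
    norm_num at hle
  have hmk : (Ideal.Quotient.mk (Ideal.span ({g} : Set A[X]))) (C a * X) =
      (Ideal.Quotient.mk (Ideal.span ({g} : Set A[X]))) (C b) := by
    rw [Ideal.Quotient.mk_eq_mk_iff_sub_mem]
    exact Ideal.subset_span (Set.mem_singleton_iff.mpr hg.symm)
  have F3 : ∀ z : A[X] ⧸ Ideal.span ({g} : Set A[X]),
      ∃ (n : ℕ) (m : A), (μ a) ^ n * z = μ m := by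
    intro z
    obtain ⟨f, rfl⟩ := Ideal.Quotient.mk_surjective z
    induction f using Polynomial.induction_on with
    | C c => exact ⟨0, c, by simp [hμ]⟩
    | add f₁ f₂ ih₁ ih₂ =>
      obtain ⟨n₁, m₁, h₁⟩ := ih₁
      obtain ⟨n₂, m₂, h₂⟩ := ih₂
      refine ⟨n₁ + n₂, a ^ n₂ * m₁ + a ^ n₁ * m₂, ?_⟩
      simp only [map_add, map_mul, map_pow, pow_add]
      linear_combination (μ a) ^ n₂ * h₁ + (μ a) ^ n₁ * h₂
    | monomial n c ih =>
      obtain ⟨k, m, hk⟩ := ih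
      refine ⟨k + 1, b * m, ?_⟩
      have hX : (Ideal.Quotient.mk (Ideal.span ({g} : Set A[X]))) (C c * X ^ (n + 1)) =
          (Ideal.Quotient.mk (Ideal.span ({g} : Set A[X]))) (C c * X ^ n) *
            (Ideal.Quotient.mk (Ideal.span ({g} : Set A[X]))) X := by
        rw [← map_mul]
        ring_nf
      have hmk' : (Ideal.Quotient.mk (Ideal.span ({g} : Set A[X]))) (C a) *
          (Ideal.Quotient.mk (Ideal.span ({g} : Set A[X]))) X =
          (Ideal.Quotient.mk (Ideal.span ({g} : Set A[X]))) (C b) := by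
        rw [← map_mul]; exact hmk
      simp only [hμ, RingHom.comp_apply, map_mul, map_pow, pow_succ] at hk ⊢
      linear_combination
        ((Ideal.Quotient.mk (Ideal.span ({g} : Set A[X]))) (C a) *
            (Ideal.Quotient.mk (Ideal.span ({g} : Set A[X]))) X) * hk +
        ((Ideal.Quotient.mk (Ideal.span ({g} : Set A[X]))) (C m)) * hmk'
  -- `μ a` is prime
  have hJp : (Ideal.span ({a, b} : Set A)).IsPrime := by
    rw [show ({a, b} : Set A) = {a} ∪ {b} by rw [Set.singleton_union], Ideal.span_union]
    exact habprime
  haveI := hJp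
  haveI : IsDomain (A ⧸ Ideal.span ({a, b} : Set A)) :=
    (Ideal.Quotient.isDomain_iff_prime _).mpr hJp
  have hkerprime : (Ideal.span ({C a, C b} : Set A[X])).IsPrime := by
    have hker : RingHom.ker
        (Polynomial.mapRingHom (Ideal.Quotient.mk (Ideal.span ({a, b} : Set A)))) =
        Ideal.span ({C a, C b} : Set A[X]) := by
      rw [Polynomial.ker_mapRingHom, Ideal.mk_ker, Ideal.map_span, Set.image_insert_eq,
        Set.image_singleton]
    rw [← hker]
    exact RingHom.ker_isPrime _
  have hIeq : Ideal.span ({C a, g} : Set A[X]) = Ideal.span ({C a, C b} : Set A[X]) := by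
    apply le_antisymm
    · rw [Ideal.span_le]
      rintro x (rfl | rfl)
      · exact Ideal.subset_span (Set.mem_insert _ _)
      · rw [hg]
        exact Ideal.sub_mem _
          (Ideal.mul_mem_right _ _ (Ideal.subset_span (Set.mem_insert _ _)))
          (Ideal.subset_span (Set.mem_insert_of_mem _ rfl))
    · rw [Ideal.span_le]
      rintro x (rfl | rfl)
      · exact Ideal.subset_span (Set.mem_insert _ _)
      · have hcb : (C b : A[X]) = C a * X - g := by rw [hg]; ring
        rw [hcb]
        exact Ideal.sub_mem _
          (Ideal.mul_mem_right _ _ (Ideal.subset_span (Set.mem_insert _ _)))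
          (Ideal.subset_span (Set.mem_insert_of_mem _ rfl))
  haveI hIp : (Ideal.span ({C a, g} : Set A[X])).IsPrime := hIeq ▸ hkerprime
  have hmap : Ideal.map (Ideal.Quotient.mk (Ideal.span ({g} : Set A[X])))
      (Ideal.span ({C a, g} : Set A[X])) = Ideal.span {μ a} := by
    rw [Ideal.map_span, Set.image_insert_eq, Set.image_singleton]
    have h0 : (Ideal.Quotient.mk (Ideal.span ({g} : Set A[X]))) g = 0 := by
      rw [Ideal.Quotient.eq_zero_iff_mem]
      exact Ideal.subset_span rfl
    apply le_antisymm
    · rw [Ideal.span_le]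
      rintro x (rfl | rfl)
      · exact Ideal.subset_span rfl
      · rw [h0]; exact Ideal.zero_mem _
    · rw [Ideal.span_le]
      rintro x rfl
      exact Ideal.subset_span (Set.mem_insert _ _)
  have hμaprime_ideal : (Ideal.span ({μ a} : Set (A[X] ⧸ Ideal.span ({g} : Set A[X])))).IsPrime := by
    rw [← hmap]
    refine Ideal.map_isPrime_of_surjective Ideal.Quotient.mk_surjective ?_
    rw [Ideal.mk_ker]
    refine Ideal.span_le.mpr ?_
    rintro x rfl
    exact Ideal.subset_span (Set.mem_insert_of_mem _ rfl)
  have hμane : μ a ≠ 0 := fun h => ha (hinj (by rw [h, map_zero]))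
  have hμaprime : Prime (μ a) := (Ideal.span_singleton_prime hμane).mp hμaprime_ideal
  exact ⟨hdom, nagata_aux μ hinj a hpa hμaprime F3⟩

/-- Samuel's criterion, for `A = k[x,y]`: if `a, b ∈ A` are nonzero,
`aA` is prime, `aA ∩ bA = abA`, and `aA + bA` is prime, then `B = A[X]/(aX - b)`
is a unique factorization domain. -/
theorem stmt_5 (k : Type*) [Field k]
    (a b : MvPolynomial (Fin 2) k) (ha : a ≠ 0) (hb : b ≠ 0)
    (haprime : (Ideal.span {a}).IsPrime)
    (hrp : Ideal.span {a} ⊓ Ideal.span {b} = Ideal.span {a * b})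
    (habprime : (Ideal.span {a} ⊔ Ideal.span {b}).IsPrime) :
    ∃ h : IsDomain ((MvPolynomial (Fin 2) k)[X] ⧸
        (Ideal.span {C a * X - C b} : Ideal (MvPolynomial (Fin 2) k)[X])),
      UniqueFactorizationMonoid ((MvPolynomial (Fin 2) k)[X] ⧸
        (Ideal.span {C a * X - C b} : Ideal (MvPolynomial (Fin 2) k)[X])) := by
  have hpa : Prime a := (Ideal.span_singleton_prime ha).mp haprime
  have hcop : ∀ c : MvPolynomial (Fin 2) k, c ∣ a → c ∣ b → IsUnit c := by
    intro c hca hcb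
    by_contra hcu
    have hc0 : c ≠ 0 := by
      rintro rfl
      exact ha (zero_dvd_iff.mp hca)
    obtain ⟨p, hpirr, hpc⟩ := WfDvdMonoid.exists_irreducible_factor hcu hc0
    have hp : Prime p := UniqueFactorizationMonoid.irreducible_iff_prime.mp hpirr
    obtain ⟨a', ha'⟩ := hpc.trans hca
    obtain ⟨b', hb'⟩ := hpc.trans hcb
    have hmem : a * b' ∈ Ideal.span {a} ⊓ Ideal.span {b} := by
      refine Ideal.mem_inf.mpr ⟨?_, ?_⟩
      · exact Ideal.mem_span_singleton.mpr ⟨b', rfl⟩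
      · refine Ideal.mem_span_singleton.mpr ⟨a', ?_⟩
        rw [ha', hb']; ring
    rw [hrp, Ideal.mem_span_singleton] at hmem
    obtain ⟨t, ht⟩ := hmem
    have hb'' : b' = b * t := by
      apply mul_left_cancel₀ ha
      rw [ht]; ring
    have h1 : (1 : MvPolynomial (Fin 2) k) = p * t := by
      apply mul_left_cancel₀ hb
      rw [mul_one]
      calc b = p * b' := hb'
        _ = p * (b * t) := by rw [hb'']
        _ = b * (p * t) := by ring
    exact hp.not_isUnit (IsUnit.of_mul_eq_one _ h1.symm)
  exact samuel_aux a b ha hb hpa hcop habprime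
end

section
/- Let k be a field, A = k[x,y] a polynomial ring in two variables, and let a, b ∈ A satisfy A/aA ≅ k[t,t⁻¹] (Laurent polynomial ring), A/bA ≅ k[t], and A/(aA + bA) ≅ k. Define B = A[b/a], the subring of the localization A_a generated by A and b/a. Then the group of units of B equals k*, i.e., B* = A* = k*. -/
set_option maxHeartbeats 1000000
set_option synthInstance.maxHeartbeats 400000

open MvPolynomial

section Aux

variable {k : Type*} [Field k]

/-- Units of a multivariate polynomial ring over a field are constants. -/
lemma aux_mv_isUnit : ∀ (n : ℕ) (f : MvPolynomial (Fin n) k), IsUnit f →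
    ∃ c : k, IsUnit c ∧ f = C c := by
  intro n
  induction n with
  | zero =>
    intro f hf
    refine ⟨constantCoeff f, hf.map constantCoeff, ?_⟩
    exact eq_C_of_isEmpty f
  | succ n ih =>
    intro f hf
    have hfe : IsUnit (finSuccEquiv k n f) := hf.map (finSuccEquiv k n)
    obtain ⟨r, hr, hC⟩ := Polynomial.isUnit_iff.mp hfe
    obtain ⟨c, hc, rfl⟩ := ih r hr
    refine ⟨c, hc, ?_⟩
    have h1 : f = (finSuccEquiv k n).symm (Polynomial.C (C c)) := by
      rw [hC]; exact ((finSuccEquiv k n).symm_apply_apply f).symm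
    have h2 := RingHom.congr_fun (finSuccEquiv_comp_C_eq_C (R := k) n) c
    rw [h1]
    simpa using h2

/-- The Laurent variable is not constant. -/
lemma aux_T_ne_C (c : k) :
    (LaurentPolynomial.T 1 : LaurentPolynomial k) ≠ LaurentPolynomial.C c := by
  intro h
  have h1 := congrArg LaurentPolynomial.degree h
  by_cases hc : c = 0
  · subst hc; simp at h1
  · rw [LaurentPolynomial.degree_T, LaurentPolynomial.degree_C hc] at h1; simp at h1

variable (a b : MvPolynomial (Fin 2) k)

/-- Key induction: no relation `a * (f₀ a^d + f₁ b a^{d-1} + ⋯ + f_d b^d) = a^d`. -/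
lemma aux_keyInd (ha : Prime a)
    (hdom : IsDomain (MvPolynomial (Fin 2) k ⧸ Ideal.span {a}))
    (hb0 : Ideal.Quotient.mk (Ideal.span {a}) b ≠ 0)
    (hbu : ¬ IsUnit (Ideal.Quotient.mk (Ideal.span {a}) b)) :
    ∀ (d : ℕ) (f : ℕ → MvPolynomial (Fin 2) k),
      a * ∑ i ∈ Finset.range (d + 1), f i * b ^ i * a ^ (d - i) ≠ a ^ d := by
  haveI := hdom
  intro d
  induction d with
  | zero =>
    intro f h
    simp only [Finset.range_one, Finset.sum_singleton, pow_zero, mul_one, Nat.zero_sub] at h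
    exact ha.not_isUnit (IsUnit.of_mul_eq_one (f 0) (by simpa using h))
  | succ n ih =>
    intro f h
    have hπa : Ideal.Quotient.mk (Ideal.span {a}) a = 0 :=
      Ideal.Quotient.eq_zero_iff_mem.mpr (Ideal.subset_span rfl)
    have h2 : ∑ i ∈ Finset.range (n + 2), f i * b ^ i * a ^ (n + 1 - i) = a ^ n := by
      have hrw : a ^ (n + 1) = a * a ^ n := by ring
      rw [hrw] at h
      exact mul_left_cancel₀ ha.ne_zero h
    have h3 : Ideal.Quotient.mk (Ideal.span {a}) (f (n + 1)) *
        Ideal.Quotient.mk (Ideal.span {a}) b ^ (n + 1) =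
        Ideal.Quotient.mk (Ideal.span {a}) a ^ n := by
      have h2' := congrArg (Ideal.Quotient.mk (Ideal.span {a})) h2
      rw [map_sum, Finset.sum_range_succ] at h2'
      have hz : ∑ i ∈ Finset.range (n + 1),
          Ideal.Quotient.mk (Ideal.span {a}) (f i * b ^ i * a ^ (n + 1 - i)) = 0 := by
        apply Finset.sum_eq_zero
        intro i hi
        have hi' : i < n + 1 := Finset.mem_range.mp hi
        rw [map_mul, map_mul, map_pow, map_pow, hπa, zero_pow (by omega), mul_zero]
      rw [hz, zero_add, map_mul, map_mul, map_pow, map_pow] at h2'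
      simpa [map_pow] using h2'
    cases n with
    | zero =>
      apply hbu
      rw [pow_zero, pow_one] at h3
      exact IsUnit.of_mul_eq_one _
        ((mul_comm (Ideal.Quotient.mk (Ideal.span {a}) b)
          (Ideal.Quotient.mk (Ideal.span {a}) (f 1))) ▸ h3)
    | succ m =>
      have h4 : Ideal.Quotient.mk (Ideal.span {a}) (f (m + 1 + 1)) *
          Ideal.Quotient.mk (Ideal.span {a}) b ^ (m + 1 + 1) = 0 := by
        rw [h3, hπa, zero_pow (by omega)]
      have h5 : Ideal.Quotient.mk (Ideal.span {a}) (f (m + 1 + 1)) = 0 := by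
        rcases mul_eq_zero.mp h4 with h' | h'
        · exact h'
        · exact absurd (pow_eq_zero_iff (by omega) |>.mp h') hb0
      obtain ⟨g, hg⟩ : a ∣ f (m + 1 + 1) :=
        Ideal.mem_span_singleton.mp (Ideal.Quotient.eq_zero_iff_mem.mp h5)
      apply ih (fun i => if i = m + 1 then f (m + 1) + g * b else f i)
      have e1 : ∀ i ∈ Finset.range (m + 1),
          f i * b ^ i * a ^ (m + 1 + 1 - i) = a * (f i * b ^ i * a ^ (m + 1 - i)) := by
        intro i hi
        have hi' : i < m + 1 := Finset.mem_range.mp hi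
        have hee : m + 1 + 1 - i = (m + 1 - i) + 1 := by omega
        rw [hee, pow_succ]; ring
      rw [Finset.sum_range_succ, Finset.sum_range_succ, Finset.sum_congr rfl e1,
        ← Finset.mul_sum, hg, Nat.sub_self, pow_zero, mul_one,
        (by omega : m + 1 + 1 - (m + 1) = 1), pow_one] at h2
      rw [Finset.sum_range_succ]
      have e2 : ∀ i ∈ Finset.range (m + 1),
          (if i = m + 1 then f (m + 1) + g * b else f i) * b ^ i * a ^ (m + 1 - i)
            = f i * b ^ i * a ^ (m + 1 - i) := by
        intro i hi
        have hi' : i < m + 1 := Finset.mem_range.mp hi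
        rw [if_neg (by omega)]
      rw [Finset.sum_congr rfl e2, if_pos rfl, Nat.sub_self, pow_zero, mul_one]
      linear_combination h2

/-- Key lemma: no negative power of `a` lies in `B = A[b/a]`. -/
lemma aux_keyB (ha : Prime a)
    (hdom : IsDomain (MvPolynomial (Fin 2) k ⧸ Ideal.span {a}))
    (hb0 : Ideal.Quotient.mk (Ideal.span {a}) b ≠ 0)
    (hbu : ¬ IsUnit (Ideal.Quotient.mk (Ideal.span {a}) b))
    (z : Localization.Away a)
    (hz : z ∈ Algebra.adjoin (MvPolynomial (Fin 2) k)
      {IsLocalization.Away.invSelf a *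
        algebraMap (MvPolynomial (Fin 2) k) (Localization.Away a) b})
    (t : ℕ) (ht : 1 ≤ t)
    (h1 : z * algebraMap (MvPolynomial (Fin 2) k) (Localization.Away a) a ^ t = 1) :
    False := by
  rw [Algebra.adjoin_singleton_eq_range_aeval] at hz
  obtain ⟨p, hp'⟩ := hz
  have hp : Polynomial.aeval
      (IsLocalization.Away.invSelf a *
        algebraMap (MvPolynomial (Fin 2) k) (Localization.Away a) b) p = z := hp'
  have hinv : algebraMap (MvPolynomial (Fin 2) k) (Localization.Away a) a *
      IsLocalization.Away.invSelf a = 1 := IsLocalization.Away.mul_invSelf a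
  have hw : ∀ i N : ℕ, i ≤ N →
      (IsLocalization.Away.invSelf a *
        algebraMap (MvPolynomial (Fin 2) k) (Localization.Away a) b) ^ i *
      algebraMap (MvPolynomial (Fin 2) k) (Localization.Away a) a ^ N =
      algebraMap (MvPolynomial (Fin 2) k) (Localization.Away a) (b ^ i * a ^ (N - i)) := by
    intro i N hiN
    have hpw : algebraMap (MvPolynomial (Fin 2) k) (Localization.Away a) a ^ N =
        algebraMap (MvPolynomial (Fin 2) k) (Localization.Away a) a ^ i *
        algebraMap (MvPolynomial (Fin 2) k) (Localization.Away a) a ^ (N - i) := by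
      rw [← pow_add]; congr 1; omega
    calc (IsLocalization.Away.invSelf a *
          algebraMap (MvPolynomial (Fin 2) k) (Localization.Away a) b) ^ i *
        algebraMap (MvPolynomial (Fin 2) k) (Localization.Away a) a ^ N
        = (algebraMap (MvPolynomial (Fin 2) k) (Localization.Away a) a *
            IsLocalization.Away.invSelf a) ^ i *
          (algebraMap (MvPolynomial (Fin 2) k) (Localization.Away a) b ^ i *
            algebraMap (MvPolynomial (Fin 2) k) (Localization.Away a) a ^ (N - i)) := by
          rw [hpw, mul_pow, mul_pow]; ring
      _ = algebraMap (MvPolynomial (Fin 2) k) (Localization.Away a) (b ^ i * a ^ (N - i)) := by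
          rw [hinv, one_pow, one_mul, map_mul, map_pow, map_pow]
  have hzN : z * algebraMap (MvPolynomial (Fin 2) k) (Localization.Away a) a ^ (p.natDegree + t)
      = algebraMap (MvPolynomial (Fin 2) k) (Localization.Away a)
        (∑ i ∈ Finset.range (p.natDegree + 1),
          p.coeff i * (b ^ i * a ^ (p.natDegree + t - i))) := by
    rw [← hp, Polynomial.aeval_eq_sum_range, Finset.sum_mul, map_sum]
    apply Finset.sum_congr rfl
    intro i hi
    have hi' : i < p.natDegree + 1 := Finset.mem_range.mp hi
    rw [Algebra.smul_def, map_mul, mul_assoc, hw i (p.natDegree + t) (by omega)]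
  have hzN2 : z * algebraMap (MvPolynomial (Fin 2) k) (Localization.Away a) a ^ (p.natDegree + t)
      = algebraMap (MvPolynomial (Fin 2) k) (Localization.Away a) (a ^ p.natDegree) := by
    have hpw : algebraMap (MvPolynomial (Fin 2) k) (Localization.Away a) a ^ (p.natDegree + t) =
        algebraMap (MvPolynomial (Fin 2) k) (Localization.Away a) a ^ t *
        algebraMap (MvPolynomial (Fin 2) k) (Localization.Away a) a ^ p.natDegree := by
      rw [← pow_add]; congr 1; omega
    rw [hpw, ← mul_assoc, h1, one_mul, map_pow]
  have hinj : Function.Injective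
      (algebraMap (MvPolynomial (Fin 2) k) (Localization.Away a)) :=
    IsLocalization.injective (Localization.Away a)
      (powers_le_nonZeroDivisors_of_noZeroDivisors ha.ne_zero)
  have hF : ∑ i ∈ Finset.range (p.natDegree + 1),
      p.coeff i * (b ^ i * a ^ (p.natDegree + t - i)) = a ^ p.natDegree :=
    hinj (hzN.symm.trans hzN2)
  apply aux_keyInd a b ha hdom hb0 hbu p.natDegree (fun i => a ^ (t - 1) * p.coeff i)
  calc a * ∑ i ∈ Finset.range (p.natDegree + 1),
        a ^ (t - 1) * p.coeff i * b ^ i * a ^ (p.natDegree - i)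
      = ∑ i ∈ Finset.range (p.natDegree + 1),
          p.coeff i * (b ^ i * a ^ (p.natDegree + t - i)) := by
        rw [Finset.mul_sum]
        apply Finset.sum_congr rfl
        intro i hi
        have hi' : i < p.natDegree + 1 := Finset.mem_range.mp hi
        have he : p.natDegree + t - i = 1 + (t - 1) + (p.natDegree - i) := by omega
        rw [he, pow_add, pow_add]; ring
    _ = a ^ p.natDegree := hF

end Aux

/-- Let `A = k[x,y]` and `a, b ∈ A` with `A/aA ≅ k[t,t⁻¹]`, `A/bA ≅ k[t]`
and `A/(aA+bA) ≅ k`. Then the units of `B = A[b/a] ⊆ A_a` are exactly `k*`. -/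
theorem stmt_6 (k : Type*) [Field k]
    (a b : MvPolynomial (Fin 2) k)
    (hA : Nonempty ((MvPolynomial (Fin 2) k ⧸ Ideal.span {a}) ≃ₐ[k] LaurentPolynomial k))
    (hB : Nonempty ((MvPolynomial (Fin 2) k ⧸ Ideal.span {b}) ≃ₐ[k] Polynomial k))
    (hAB : Nonempty ((MvPolynomial (Fin 2) k ⧸ (Ideal.span {a} ⊔ Ideal.span {b})) ≃ₐ[k] k))
    (B : Subalgebra (MvPolynomial (Fin 2) k) (Localization.Away a))
    (hBdef : B = Algebra.adjoin (MvPolynomial (Fin 2) k)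
      {IsLocalization.Away.invSelf a * algebraMap (MvPolynomial (Fin 2) k) (Localization.Away a) b}) :
    ∀ u : (↥B)ˣ, ∃ c : kˣ,
      ((u : ↥B) : Localization.Away a)
        = algebraMap (MvPolynomial (Fin 2) k) (Localization.Away a) (C (c : k)) := by
  intro u
  by_cases ha0 : a = 0
  · subst ha0
    haveI : Subsingleton (Localization.Away (0 : MvPolynomial (Fin 2) k)) :=
      IsLocalization.subsingleton (S := Localization.Away (0 : MvPolynomial (Fin 2) k))
        (M := Submonoid.powers (0 : MvPolynomial (Fin 2) k)) ⟨1, by simp⟩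
    exact ⟨1, Subsingleton.elim _ _⟩
  obtain ⟨eA⟩ := hA
  obtain ⟨eAB⟩ := hAB
  haveI hLaurDom : IsDomain (LaurentPolynomial k) := NoZeroDivisors.to_isDomain _
  have hdom : IsDomain (MvPolynomial (Fin 2) k ⧸ Ideal.span {a}) :=
    Function.Injective.isDomain
      (eA : (MvPolynomial (Fin 2) k ⧸ Ideal.span {a}) →+* LaurentPolynomial k) eA.injective
  haveI := hdom
  have hprime : Prime a :=
    (Ideal.span_singleton_prime ha0).mp ((Ideal.Quotient.isDomain_iff_prime _).mp hdom)
  -- b is not a unit modulo a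
  have hbu : ¬ IsUnit (Ideal.Quotient.mk (Ideal.span {a}) b) := by
    intro h
    obtain ⟨v, hv⟩ := h.exists_right_inv
    obtain ⟨g, rfl⟩ := Ideal.Quotient.mk_surjective v
    have hz : Ideal.Quotient.mk (Ideal.span {a}) (b * g - 1) = 0 := by
      rw [map_sub, map_mul, hv, map_one, sub_self]
    have hmem : b * g - 1 ∈ Ideal.span ({a} : Set (MvPolynomial (Fin 2) k)) :=
      Ideal.Quotient.eq_zero_iff_mem.mp hz
    have h1 : (1 : MvPolynomial (Fin 2) k) ∈ Ideal.span {a} ⊔ Ideal.span {b} := by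
      have hbg : b * g ∈ Ideal.span ({b} : Set (MvPolynomial (Fin 2) k)) :=
        Ideal.mem_span_singleton.mpr (dvd_mul_right b g)
      have hrw : (1 : MvPolynomial (Fin 2) k) = b * g - (b * g - 1) := by ring
      rw [hrw]
      exact Submodule.sub_mem _ (Ideal.mem_sup_right hbg) (Ideal.mem_sup_left hmem)
    have htop : Ideal.span ({a} : Set (MvPolynomial (Fin 2) k)) ⊔ Ideal.span {b} = ⊤ :=
      (Ideal.eq_top_iff_one _).mpr h1
    haveI hsub : Subsingleton
        (MvPolynomial (Fin 2) k ⧸ (Ideal.span ({a} : Set (MvPolynomial (Fin 2) k)) ⊔ Ideal.span {b})) :=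
      Ideal.Quotient.subsingleton_iff.mpr htop
    have h10 : (1 : MvPolynomial (Fin 2) k ⧸
        (Ideal.span ({a} : Set (MvPolynomial (Fin 2) k)) ⊔ Ideal.span {b})) = 0 :=
      Subsingleton.elim _ _
    have h11 := congrArg eAB h10
    rw [map_one, map_zero] at h11
    exact one_ne_zero h11
  -- b is nonzero modulo a
  have hb0 : Ideal.Quotient.mk (Ideal.span {a}) b ≠ 0 := by
    intro h
    have hmem : b ∈ Ideal.span ({a} : Set (MvPolynomial (Fin 2) k)) :=
      Ideal.Quotient.eq_zero_iff_mem.mp h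
    have hsup : Ideal.span ({a} : Set (MvPolynomial (Fin 2) k)) ⊔ Ideal.span {b} =
        Ideal.span {a} := sup_eq_left.mpr ((Ideal.span_singleton_le_iff_mem _).mpr hmem)
    rw [hsup] at eAB
    have e : LaurentPolynomial k ≃ₐ[k] k := eA.symm.trans eAB
    have hT : (LaurentPolynomial.T 1 : LaurentPolynomial k)
        = LaurentPolynomial.C (e (LaurentPolynomial.T 1)) := by
      have h1 := e.symm.commutes (e (LaurentPolynomial.T 1))
      rw [Algebra.algebraMap_self_apply] at h1
      rw [LaurentPolynomial.C_eq_algebraMap, ← h1, e.symm_apply_apply]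
    exact aux_T_ne_C _ hT
  -- the localization map is injective
  have hinj : Function.Injective
      (algebraMap (MvPolynomial (Fin 2) k) (Localization.Away a)) :=
    IsLocalization.injective (Localization.Away a)
      (powers_le_nonZeroDivisors_of_noZeroDivisors hprime.ne_zero)
  have hφa : IsUnit (algebraMap (MvPolynomial (Fin 2) k) (Localization.Away a) a) :=
    IsUnit.of_mul_eq_one _ (IsLocalization.Away.mul_invSelf a)
  have hUV : ((u : B) : Localization.Away a) * (((u⁻¹ : Bˣ) : B) : Localization.Away a) = 1 := by
    have h2 : (((u : B) * ((u⁻¹ : Bˣ) : B) : B) : Localization.Away a)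
        = ((1 : B) : Localization.Away a) :=
      congrArg (fun x : B => (x : Localization.Away a)) u.mul_inv
    rw [MulMemClass.coe_mul, OneMemClass.coe_one] at h2
    exact h2
  obtain ⟨⟨fU, sU⟩, hUs⟩ := IsLocalization.surj (Submonoid.powers a)
    ((u : B) : Localization.Away a)
  obtain ⟨m, hm⟩ := sU.2
  obtain ⟨⟨fV, sV⟩, hVs⟩ := IsLocalization.surj (Submonoid.powers a)
    (((u⁻¹ : Bˣ) : B) : Localization.Away a)
  obtain ⟨l, hl⟩ := sV.2
  simp only at hUs hVs
  have hUm : ((u : B) : Localization.Away a) *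
      algebraMap (MvPolynomial (Fin 2) k) (Localization.Away a) a ^ m =
      algebraMap (MvPolynomial (Fin 2) k) (Localization.Away a) fU := by
    have h' : algebraMap (MvPolynomial (Fin 2) k) (Localization.Away a) (sU : MvPolynomial (Fin 2) k)
        = algebraMap (MvPolynomial (Fin 2) k) (Localization.Away a) a ^ m := by
      rw [← hm, map_pow]
    rw [← h']; exact hUs
  have hVl : (((u⁻¹ : Bˣ) : B) : Localization.Away a) *
      algebraMap (MvPolynomial (Fin 2) k) (Localization.Away a) a ^ l =
      algebraMap (MvPolynomial (Fin 2) k) (Localization.Away a) fV := by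
    have h' : algebraMap (MvPolynomial (Fin 2) k) (Localization.Away a) (sV : MvPolynomial (Fin 2) k)
        = algebraMap (MvPolynomial (Fin 2) k) (Localization.Away a) a ^ l := by
      rw [← hl, map_pow]
    rw [← h']; exact hVs
  have hfg : fU * fV = a ^ (m + l) := by
    apply hinj
    rw [map_mul, ← hUm, ← hVl, map_pow]
    calc ((u : B) : Localization.Away a) *
          algebraMap (MvPolynomial (Fin 2) k) (Localization.Away a) a ^ m *
        ((((u⁻¹ : Bˣ) : B) : Localization.Away a) *
          algebraMap (MvPolynomial (Fin 2) k) (Localization.Away a) a ^ l)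
        = (((u : B) : Localization.Away a) * (((u⁻¹ : Bˣ) : B) : Localization.Away a)) *
          (algebraMap (MvPolynomial (Fin 2) k) (Localization.Away a) a ^ m *
           algebraMap (MvPolynomial (Fin 2) k) (Localization.Away a) a ^ l) := by ring
      _ = algebraMap (MvPolynomial (Fin 2) k) (Localization.Away a) a ^ (m + l) := by
          rw [hUV, one_mul, pow_add]
  obtain ⟨j, hj, hassoc⟩ := (dvd_prime_pow hprime _).mp ⟨fV, hfg.symm⟩
  obtain ⟨v, hv⟩ := hassoc
  obtain ⟨c, hc, hCc⟩ := aux_mv_isUnit 2 ((v⁻¹ : (MvPolynomial (Fin 2) k)ˣ) : MvPolynomial (Fin 2) k)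
    (v⁻¹ : (MvPolynomial (Fin 2) k)ˣ).isUnit
  have hfU : fU = C c * a ^ j := by
    have h1 : fU = a ^ j * ((v⁻¹ : (MvPolynomial (Fin 2) k)ˣ) : MvPolynomial (Fin 2) k) := by
      rw [← hv, mul_assoc, Units.mul_inv, mul_one]
    rw [h1, hCc]; ring
  have hEq : ((u : B) : Localization.Away a) *
      algebraMap (MvPolynomial (Fin 2) k) (Localization.Away a) a ^ m =
      algebraMap (MvPolynomial (Fin 2) k) (Localization.Away a) (C c) *
      algebraMap (MvPolynomial (Fin 2) k) (Localization.Away a) a ^ j := by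
    rw [hUm, hfU, map_mul, map_pow]
  have hUB : ((u : B) : Localization.Away a) ∈ Algebra.adjoin (MvPolynomial (Fin 2) k)
      {IsLocalization.Away.invSelf a *
        algebraMap (MvPolynomial (Fin 2) k) (Localization.Away a) b} := hBdef ▸ (u : B).2
  have hVB : (((u⁻¹ : Bˣ) : B) : Localization.Away a) ∈ Algebra.adjoin (MvPolynomial (Fin 2) k)
      {IsLocalization.Away.invSelf a *
        algebraMap (MvPolynomial (Fin 2) k) (Localization.Away a) b} :=
    hBdef ▸ ((u⁻¹ : Bˣ) : B).2
  have hφmem : ∀ x : MvPolynomial (Fin 2) k,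
      algebraMap (MvPolynomial (Fin 2) k) (Localization.Away a) x ∈
        Algebra.adjoin (MvPolynomial (Fin 2) k)
          {IsLocalization.Away.invSelf a *
            algebraMap (MvPolynomial (Fin 2) k) (Localization.Away a) b} := fun x =>
    Subalgebra.algebraMap_mem _ x
  rcases lt_trichotomy j m with hlt | heq | hgt
  · exfalso
    have ht : 1 ≤ m - j := by omega
    have hsplit : algebraMap (MvPolynomial (Fin 2) k) (Localization.Away a) a ^ m =
        algebraMap (MvPolynomial (Fin 2) k) (Localization.Away a) a ^ j *
        algebraMap (MvPolynomial (Fin 2) k) (Localization.Away a) a ^ (m - j) := by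
      rw [← pow_add]; congr 1; omega
    have h2 : ((u : B) : Localization.Away a) *
        algebraMap (MvPolynomial (Fin 2) k) (Localization.Away a) a ^ (m - j) =
        algebraMap (MvPolynomial (Fin 2) k) (Localization.Away a) (C c) := by
      apply (hφa.pow j).mul_right_cancel
      rw [← hEq, hsplit]; ring
    have h4 : (((u : B) : Localization.Away a) *
        algebraMap (MvPolynomial (Fin 2) k) (Localization.Away a) (C c⁻¹)) *
        algebraMap (MvPolynomial (Fin 2) k) (Localization.Away a) a ^ (m - j) = 1 := by
      have hre : ((u : B) : Localization.Away a) *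
          algebraMap (MvPolynomial (Fin 2) k) (Localization.Away a) (C c⁻¹) *
          algebraMap (MvPolynomial (Fin 2) k) (Localization.Away a) a ^ (m - j) =
          (((u : B) : Localization.Away a) *
            algebraMap (MvPolynomial (Fin 2) k) (Localization.Away a) a ^ (m - j)) *
          algebraMap (MvPolynomial (Fin 2) k) (Localization.Away a) (C c⁻¹) := by ring
      rw [hre, h2, ← map_mul, ← C_mul, mul_inv_cancel₀ hc.ne_zero, C_1, map_one]
    exact aux_keyB a b hprime hdom hb0 hbu _ (mul_mem hUB (hφmem _)) (m - j) ht h4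
  · refine ⟨hc.unit, ?_⟩
    have h2 : ((u : B) : Localization.Away a) =
        algebraMap (MvPolynomial (Fin 2) k) (Localization.Away a) (C c) := by
      apply (hφa.pow m).mul_right_cancel
      rw [hEq, heq]
    rw [IsUnit.unit_spec]
    exact h2
  · exfalso
    have ht : 1 ≤ j - m := by omega
    have hsplit : algebraMap (MvPolynomial (Fin 2) k) (Localization.Away a) a ^ j =
        algebraMap (MvPolynomial (Fin 2) k) (Localization.Away a) a ^ (j - m) *
        algebraMap (MvPolynomial (Fin 2) k) (Localization.Away a) a ^ m := by
      rw [← pow_add]; congr 1; omega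
    have h2 : ((u : B) : Localization.Away a) =
        algebraMap (MvPolynomial (Fin 2) k) (Localization.Away a) (C c) *
        algebraMap (MvPolynomial (Fin 2) k) (Localization.Away a) a ^ (j - m) := by
      apply (hφa.pow m).mul_right_cancel
      rw [hEq, hsplit]; ring
    have h4 : ((((u⁻¹ : Bˣ) : B) : Localization.Away a) *
        algebraMap (MvPolynomial (Fin 2) k) (Localization.Away a) (C c)) *
        algebraMap (MvPolynomial (Fin 2) k) (Localization.Away a) a ^ (j - m) = 1 := by
      calc ((((u⁻¹ : Bˣ) : B) : Localization.Away a) *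
            algebraMap (MvPolynomial (Fin 2) k) (Localization.Away a) (C c)) *
            algebraMap (MvPolynomial (Fin 2) k) (Localization.Away a) a ^ (j - m)
          = (((u⁻¹ : Bˣ) : B) : Localization.Away a) *
            (algebraMap (MvPolynomial (Fin 2) k) (Localization.Away a) (C c) *
             algebraMap (MvPolynomial (Fin 2) k) (Localization.Away a) a ^ (j - m)) := by ring
        _ = (((u⁻¹ : Bˣ) : B) : Localization.Away a) * ((u : B) : Localization.Away a) := by
            rw [h2]
        _ = 1 := by rw [mul_comm]; exact hUV
    exact aux_keyB a b hprime hdom hb0 hbu _ (mul_mem hVB (hφmem _)) (j - m) ht h4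
end

section
/- Let R be an integral domain such that every non-negative degree function on R is trivial (R is degree-rigid). Then for every n ≥ 0, the degree-neutral invariant of the polynomial ring R[x₁,...,xₙ] equals R, i.e., Δ⁰(R^[n]) = R. -/
/-- A non-negative degree function on a commutative ring. -/
def IsNNDegFun {S : Type*} [CommRing S] (deg : S → WithBot ℕ) : Prop :=
  (∀ f : S, deg f = ⊥ ↔ f = 0) ∧
  (∀ f g : S, deg (f * g) = deg f + deg g) ∧
  (∀ f g : S, deg (f + g) ≤ max (deg f) (deg g))

open MvPolynomial in
/-- If every non-negative degree function on a domain `R` is trivial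
(`R` is degree-rigid), then for each `n ≥ 0` the degree-neutral invariant of
`R[x₁,…,xₙ]` equals `R`: the set of polynomials `p` with `deg p ≤ 0` for every
non-negative degree function `deg` is exactly the set of constants. -/
theorem stmt_11 (R : Type*) [CommRing R] [IsDomain R]
    (hrigid : ∀ deg : R → WithBot ℕ, IsNNDegFun deg → ∀ r : R, r ≠ 0 → deg r = 0)
    (n : ℕ) :
    {p : MvPolynomial (Fin n) R |
        ∀ deg : MvPolynomial (Fin n) R → WithBot ℕ, IsNNDegFun deg → deg p ≤ 0}
      = Set.range (MvPolynomial.C : R → MvPolynomial (Fin n) R) := by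
  ext p
  simp only [Set.mem_setOf_eq, Set.mem_range]
  constructor
  · intro hp
    rcases eq_or_ne p 0 with rfl | hp0
    · exact ⟨0, by simp⟩
    rcases n with _ | m
    · exact MvPolynomial.C_surjective (Fin 0) p
    -- show degreeOf i p = 0 for each i
    have key : ∀ i : Fin (m + 1), degreeOf i p = 0 := by
      intro i
      set e : MvPolynomial (Fin (m + 1)) R ≃+* Polynomial (MvPolynomial (Fin m) R) :=
        (renameEquiv R (Equiv.swap i 0)).toRingEquiv.trans
          (finSuccEquiv R m).toRingEquiv with he
      set D : MvPolynomial (Fin (m + 1)) R → WithBot ℕ := fun q => (e q).degree with hD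
      have hnn : IsNNDegFun D := by
        refine ⟨fun f => ?_, fun f g => ?_, fun f g => ?_⟩
        · rw [hD, Polynomial.degree_eq_bot, map_eq_zero_iff e e.injective]
        · simp only [hD, map_mul, Polynomial.degree_mul]
        · simp only [hD, map_add]
          exact Polynomial.degree_add_le _ _
      have h1 : D p ≤ 0 := hp D hnn
      have h2 : e p = finSuccEquiv R m (rename (Equiv.swap i 0) p) := rfl
      have h3 : rename (Equiv.swap i 0) p ≠ 0 := by
        intro h
        exact hp0 ((rename_injective (⇑(Equiv.swap i 0)) (Equiv.injective _)) (by rw [h, map_zero]))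
      have h4 : (e p).degree = (degreeOf 0 (rename (Equiv.swap i 0) p) : WithBot ℕ) := by
        rw [h2, degree_finSuccEquiv h3]
      have h5 : degreeOf 0 (rename (⇑(Equiv.swap i 0)) p) = degreeOf i p := by
        have := degreeOf_rename_of_injective (p := p)
          (f := ⇑(Equiv.swap i 0)) (Equiv.injective _) i
        rwa [Equiv.swap_apply_left] at this
      have h1' : (e p).degree ≤ 0 := h1
      rw [h4, h5] at h1'
      exact Nat.le_zero.mp (by exact_mod_cast h1')
    refine ⟨coeff 0 p, ?_⟩
    ext m'
    rw [coeff_C]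
    split_ifs with h
    · rw [← h]
    · by_contra hc
      obtain ⟨x, hx⟩ : ∃ x, m' x ≠ 0 := by
        by_contra hall
        push_neg at hall
        exact h (by ext x; exact (hall x).symm)
      have hmem : m' ∈ p.support := by
        rw [mem_support_iff]
        exact fun h0 => hc (by rw [h0])
      have := monomial_le_degreeOf x hmem
      rw [key x] at this
      exact hx (Nat.le_zero.mp this)
  · rintro ⟨r, rfl⟩ deg hdeg
    rcases eq_or_ne r 0 with rfl | hr
    · simp only [map_zero]
      rw [(hdeg.1 0).mpr rfl]
      exact bot_le
    · have hcdeg : IsNNDegFun (fun s : R => deg (MvPolynomial.C s)) := by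
        refine ⟨fun f => ?_, fun f g => ?_, fun f g => ?_⟩
        · show deg (MvPolynomial.C f) = ⊥ ↔ f = 0
          rw [hdeg.1, map_eq_zero_iff _ (C_injective _ _)]
        · show deg (MvPolynomial.C (f * g)) = _
          rw [map_mul]; exact hdeg.2.1 _ _
        · show deg (MvPolynomial.C (f + g)) ≤ _
          rw [map_add]; exact hdeg.2.2 _ _
      exact le_of_eq (hrigid _ hcdeg r hr)
end

section
/- Let k be a field and n ≥ 1. The ring B_n = k[x, y, u] with u(x^n y - 1) = x - 1 is degree-rigid: every non-negative degree function δ : B_n → ℕ ∪ {-∞} satisfies δ(f) = 0 for all nonzero f ∈ B_n. -/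
open MvPolynomial

section AuxDegLemmas2

variable {k : Type*} [Field k] {n : ℕ}

noncomputable def gen (k : Type*) [Field k] (n : ℕ) : Polynomial (MvPolynomial (Fin 2) k) :=
  Polynomial.C ((X 0) ^ n * X 1 - 1) * Polynomial.X - Polynomial.C ((X 0) - 1)

noncomputable def psi (k : Type*) [Field k] : MvPolynomial (Fin 2) k →ₐ[k] Polynomial k :=
  aeval (fun i => if i = 0 then Polynomial.X else 1)

lemma a_ne (hn : 1 ≤ n) : ((X 0 : MvPolynomial (Fin 2) k)) ^ n * X 1 - 1 ≠ 0 := by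
  intro h
  have := congrArg constantCoeff h
  simp at this

lemma a_not_unit (hn : 1 ≤ n) : ¬ IsUnit (((X 0 : MvPolynomial (Fin 2) k)) ^ n * X 1 - 1) := by
  intro h
  have := h.map (psi k)
  simp [psi] at this
  have hd := Polynomial.natDegree_eq_zero_of_isUnit this
  rw [show (Polynomial.X ^ n - 1 : Polynomial k) = Polynomial.X ^ n - Polynomial.C 1 by
    simp] at hd
  rw [Polynomial.natDegree_X_pow_sub_C] at hd
  omega

lemma b_not_unit : ¬ IsUnit (((X 0 : MvPolynomial (Fin 2) k)) - 1) := by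
  intro h
  have := h.map (psi k)
  simp [psi] at this
  have hd := Polynomial.natDegree_eq_zero_of_isUnit this
  rw [show (Polynomial.X - 1 : Polynomial k) = Polynomial.X ^ 1 - Polynomial.C 1 by simp] at hd
  rw [Polynomial.natDegree_X_pow_sub_C] at hd
  omega

lemma gen_natDegree (hn : 1 ≤ n) : (gen k n).natDegree = 1 := by
  rw [gen, sub_eq_add_neg, ← Polynomial.C_neg]
  exact Polynomial.natDegree_linear (a_ne hn)

lemma gen_ne (hn : 1 ≤ n) : (gen k n) ≠ 0 := by
  intro h
  have := gen_natDegree (k := k) hn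
  rw [h] at this
  simp at this

lemma memI_C (hn : 1 ≤ n) (a : MvPolynomial (Fin 2) k)
    (h : Polynomial.C a ∈ Ideal.span {gen k n}) : a = 0 := by
  rw [Ideal.mem_span_singleton] at h
  obtain ⟨q, hq⟩ := h
  by_contra ha
  have hq0 : q ≠ 0 := by rintro rfl; rw [mul_zero] at hq; exact ha (Polynomial.C_eq_zero.mp hq)
  have := congrArg Polynomial.natDegree hq
  rw [Polynomial.natDegree_C, Polynomial.natDegree_mul (gen_ne hn) hq0, gen_natDegree hn] at this
  omega

lemma memI_deg1 (hn : 1 ≤ n) (p : Polynomial (MvPolynomial (Fin 2) k))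
    (h : p ∈ Ideal.span {gen k n}) (hd : p.natDegree ≤ 1) :
    ∃ c, p = gen k n * Polynomial.C c := by
  rw [Ideal.mem_span_singleton] at h
  obtain ⟨q, hq⟩ := h
  rcases eq_or_ne q 0 with rfl | hq0
  · exact ⟨0, by simpa using hq⟩
  have hdq : q.natDegree = 0 := by
    have := congrArg Polynomial.natDegree hq
    rw [Polynomial.natDegree_mul (gen_ne hn) hq0, gen_natDegree hn] at this
    omega
  obtain ⟨c, hc⟩ := Polynomial.natDegree_eq_zero.mp hdq
  exact ⟨c, by rw [hq, ← hc]⟩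

lemma gen_coeff_one : (gen k n).coeff 1 = (X 0) ^ n * X 1 - 1 := by
  simp only [gen, Polynomial.coeff_sub, Polynomial.coeff_C_mul, Polynomial.coeff_X_one,
    Polynomial.coeff_C]
  norm_num

lemma gen_coeff_zero : (gen k n).coeff 0 = -((X 0) - 1) := by
  simp only [gen, Polynomial.coeff_sub, Polynomial.coeff_C_mul, Polynomial.coeff_X_zero,
    Polynomial.coeff_C]
  norm_num

lemma not_Xsub1_mem (hn : 1 ≤ n) :
    (Polynomial.X - 1 : Polynomial (MvPolynomial (Fin 2) k)) ∉ Ideal.span {gen k n} := by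
  intro h
  have hd : (Polynomial.X - 1 : Polynomial (MvPolynomial (Fin 2) k)).natDegree ≤ 1 := by
    rw [show (1 : Polynomial (MvPolynomial (Fin 2) k)) = Polynomial.C 1 by simp,
      Polynomial.natDegree_X_sub_C]
  obtain ⟨c, hc⟩ := memI_deg1 hn _ h hd
  have h1 := congrArg (fun p => Polynomial.coeff p 1) hc
  simp only [Polynomial.coeff_sub, Polynomial.coeff_X_one, Polynomial.coeff_one,
    Polynomial.coeff_mul_C, gen_coeff_one] at h1
  norm_num at h1
  exact a_not_unit hn (IsUnit.of_mul_eq_one _ h1.symm)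

lemma not_uy_mem (hn : 1 ≤ n) :
    (Polynomial.C (X 1) * Polynomial.X - 1 : Polynomial (MvPolynomial (Fin 2) k)) ∉
      Ideal.span {gen k n} := by
  intro h
  have hd : (Polynomial.C (X 1) * Polynomial.X - 1 :
      Polynomial (MvPolynomial (Fin 2) k)).natDegree ≤ 1 := by
    rw [show (1 : Polynomial (MvPolynomial (Fin 2) k)) = Polynomial.C 1 by simp,
      sub_eq_add_neg, ← Polynomial.C_neg, Polynomial.natDegree_linear (X_ne_zero 1)]
  obtain ⟨c, hc⟩ := memI_deg1 hn _ h hd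
  have h1 := congrArg (fun p => Polynomial.coeff p 0) hc
  simp only [Polynomial.coeff_sub, Polynomial.coeff_one, Polynomial.coeff_mul_C,
    Polynomial.coeff_C_mul, Polynomial.coeff_X_zero, gen_coeff_zero] at h1
  norm_num at h1
  have h2 : ((X 0 : MvPolynomial (Fin 2) k) - 1) * c = 1 := by linear_combination h1
  exact b_not_unit (IsUnit.of_mul_eq_one _ h2)

end AuxDegLemmas2

lemma wb_le_max0 {m1 m2 : ℕ} (h : (WithBot.some m1 : WithBot ℕ) ≤ max (WithBot.some m2) 0) :
    m1 ≤ m2 := by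
  rw [← WithBot.coe_zero] at h
  rcases le_max_iff.mp h with h | h <;> { have := WithBot.coe_le_coe.mp h; omega }

lemma deg_one_eq_zero {Q : Type*} [CommRing Q] [Nontrivial Q] (δ : Q → WithBot ℕ)
    (hbot : ∀ f : Q, δ f = ⊥ ↔ f = 0) (hmul : ∀ f g : Q, δ (f * g) = δ f + δ g) :
    δ 1 = 0 := by
  have e := hmul 1 1
  rw [one_mul] at e
  obtain ⟨m, hm⟩ := WithBot.ne_bot_iff_exists.mp (show δ (1:Q) ≠ ⊥ by rw [Ne, hbot]; exact one_ne_zero)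
  rw [← hm] at e ⊢
  have h0 : m = m + m := by exact_mod_cast e
  have h0' : m = 0 := by omega
  rw [h0']; exact WithBot.coe_zero

lemma deg_neg_one_eq_zero {Q : Type*} [CommRing Q] [Nontrivial Q] (δ : Q → WithBot ℕ)
    (hbot : ∀ f : Q, δ f = ⊥ ↔ f = 0) (hmul : ∀ f g : Q, δ (f * g) = δ f + δ g) :
    δ (-1) = 0 := by
  have e := hmul (-1) (-1)
  rw [neg_mul_neg, one_mul, deg_one_eq_zero δ hbot hmul] at e
  obtain ⟨m, hm⟩ := WithBot.ne_bot_iff_exists.mp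
    (show δ (-1:Q) ≠ ⊥ by rw [Ne, hbot]; simp)
  rw [← hm] at e ⊢
  rw [← WithBot.coe_zero] at e
  have h0 : (0:ℕ) = m + m := by exact_mod_cast e
  have h0' : m = 0 := by omega
  rw [h0']; exact WithBot.coe_zero

lemma deg_le_of_mul_eq_one {Q : Type*} [CommRing Q] [Nontrivial Q] (δ : Q → WithBot ℕ)
    (hbot : ∀ f : Q, δ f = ⊥ ↔ f = 0) (hmul : ∀ f g : Q, δ (f * g) = δ f + δ g)
    {f g : Q} (h : f * g = 1) : δ f ≤ 0 := by
  have e := hmul f g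
  rw [h, deg_one_eq_zero δ hbot hmul] at e
  rcases eq_or_ne (δ f) ⊥ with hb | hb
  · rw [hb]; exact bot_le
  rcases eq_or_ne (δ g) ⊥ with hb2 | hb2
  · rw [hb2] at e; simp at e
  obtain ⟨m1, hm1⟩ := WithBot.ne_bot_iff_exists.mp hb
  obtain ⟨m2, hm2⟩ := WithBot.ne_bot_iff_exists.mp hb2
  rw [← hm1, ← hm2, ← WithBot.coe_zero] at e
  have h0 : m1 + m2 = 0 := by exact_mod_cast e.symm
  rw [← hm1, ← WithBot.coe_zero]
  exact WithBot.coe_le_coe.mpr (by omega)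

lemma core_deg {Q : Type*} [CommRing Q] (δ : Q → WithBot ℕ)
    (hbot : ∀ f : Q, δ f = ⊥ ↔ f = 0) (hmul : ∀ f g : Q, δ (f * g) = δ f + δ g)
    (hadd : ∀ f g : Q, δ (f + g) ≤ max (δ f) (δ g))
    (n : ℕ) (hn : 1 ≤ n) (x y u : Q)
    (hrel : u * (x ^ n * y - 1) = x - 1)
    (hx : x ≠ 0) (hy : y ≠ 0) (hx1 : x - 1 ≠ 0) (hxny : x ^ n * y - 1 ≠ 0)
    (hu1 : n = 1 → u - 1 ≠ 0) (huy : n = 1 → u * y - 1 ≠ 0) :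
    δ x = 0 ∧ δ y = 0 ∧ δ u = 0 := by
  have : Nontrivial Q := nontrivial_of_ne x 0 hx
  have h1 : δ (1 : Q) = 0 := deg_one_eq_zero δ hbot hmul
  have hneg1 : δ (-1 : Q) = 0 := deg_neg_one_eq_zero δ hbot hmul
  have hu0 : u ≠ 0 := by
    rintro rfl; rw [zero_mul] at hrel; exact hx1 hrel.symm
  have hsub1 : ∀ f : Q, f ≠ 0 → f - 1 ≠ 0 → δ (f - 1) = δ f := by
    intro f hf hf1
    obtain ⟨m1, hm1⟩ := WithBot.ne_bot_iff_exists.mp (show δ (f-1) ≠ ⊥ by rw [Ne, hbot]; exact hf1)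
    obtain ⟨m2, hm2⟩ := WithBot.ne_bot_iff_exists.mp (show δ f ≠ ⊥ by rw [Ne, hbot]; exact hf)
    have i1 : δ (f - 1) ≤ max (δ f) (δ (-1)) := by
      have := hadd f (-1)
      rw [show f + (-1) = f - 1 by ring] at this
      exact this
    have i2 : δ f ≤ max (δ (f - 1)) (δ 1) := by
      have := hadd (f - 1) 1
      rw [sub_add_cancel] at this
      exact this
    rw [hneg1, ← hm1, ← hm2] at i1
    rw [h1, ← hm1, ← hm2] at i2
    have j1 := wb_le_max0 i1
    have j2 := wb_le_max0 i2
    rw [← hm1, ← hm2]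
    exact_mod_cast (show m1 = m2 by omega)
  obtain ⟨a, ha⟩ := WithBot.ne_bot_iff_exists.mp (show δ x ≠ ⊥ by rw [Ne, hbot]; exact hx)
  obtain ⟨b, hb⟩ := WithBot.ne_bot_iff_exists.mp (show δ y ≠ ⊥ by rw [Ne, hbot]; exact hy)
  obtain ⟨c, hc⟩ := WithBot.ne_bot_iff_exists.mp (show δ u ≠ ⊥ by rw [Ne, hbot]; exact hu0)
  have hpow : ∀ m : ℕ, δ (x ^ m) = WithBot.some (m * a) := by
    intro m
    induction m with
    | zero => rw [pow_zero, h1, Nat.zero_mul]; exact WithBot.coe_zero.symm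
    | succ m ih =>
      rw [pow_succ, hmul, ih, ← ha]
      exact_mod_cast (show m * a + a = (m+1) * a by ring)
  have hxnyval : δ (x ^ n * y) = WithBot.some (n * a + b) := by
    rw [hmul, hpow, ← hb]
    exact (WithBot.coe_add _ _).symm
  have hxnyne : x ^ n * y ≠ 0 := by
    intro h0
    have h2 : δ (x ^ n * y) = ⊥ := (hbot _).mpr h0
    rw [hxnyval] at h2
    exact WithBot.coe_ne_bot h2
  have e1 := hmul u (x ^ n * y - 1)
  rw [hrel, hsub1 x hx hx1, hsub1 _ hxnyne hxny, hxnyval, ← ha, ← hc] at e1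
  have E1 : a = c + (n * a + b) := by exact_mod_cast e1
  have key : a = 0 ∧ b = 0 ∧ c = 0 := by
    rcases eq_or_lt_of_le hn with h1' | h2'
    · have hn1' : n = 1 := h1'.symm
      subst hn1'
      have hrel' : x * (u * y - 1) = u - 1 := by
        rw [pow_one] at hrel; linear_combination hrel
      have huyval : δ (u * y) = WithBot.some (c + b) := by
        rw [hmul, ← hb, ← hc]; exact (WithBot.coe_add _ _).symm
      have huyne : u * y ≠ 0 := by
        intro h0
        have h2 : δ (u * y) = ⊥ := (hbot _).mpr h0
        rw [huyval] at h2
        exact WithBot.coe_ne_bot h2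
      have e2 := hmul x (u * y - 1)
      rw [hrel', hsub1 u hu0 (hu1 rfl), hsub1 _ huyne (huy rfl), huyval, ← ha, ← hc] at e2
      have E2 : c = a + (c + b) := by exact_mod_cast e2
      omega
    · have h2n : 2 ≤ n := h2'
      have hmm : 2 * a ≤ n * a := Nat.mul_le_mul_right a h2n
      omega
  refine ⟨?_, ?_, ?_⟩
  · rw [← ha, key.1]; exact WithBot.coe_zero
  · rw [← hb, key.2.1]; exact WithBot.coe_zero
  · rw [← hc, key.2.2]; exact WithBot.coe_zero

set_option maxHeartbeats 1000000 in
set_option synthInstance.maxHeartbeats 200000 in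
/-- For a field `k` and `n ≥ 1`, the ring
`B_n = k[x,y][T]/((xⁿy - 1)T - (x - 1))` (that is, `k[x,y,u]` with
`u(xⁿy-1) = x-1`) is degree-rigid: every non-negative degree function `δ`
on `B_n` satisfies `δ(f) = 0` for all nonzero `f`. -/
theorem stmt_14 (k : Type*) [Field k] (n : ℕ) (hn : 1 ≤ n)
    (I : Ideal (Polynomial (MvPolynomial (Fin 2) k)))
    (hI : I = Ideal.span {Polynomial.C ((X 0) ^ n * X 1 - 1) * Polynomial.X
      - Polynomial.C ((X 0) - 1)}) :
    ∀ δ : (Polynomial (MvPolynomial (Fin 2) k) ⧸ I) → WithBot ℕ,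
      IsNNDegFun δ → ∀ f : Polynomial (MvPolynomial (Fin 2) k) ⧸ I, f ≠ 0 → δ f = 0 := by
  have hI' : I = Ideal.span {gen k n} := hI
  subst hI'
  intro δ hδ f hf
  obtain ⟨hbot, hmul, hadd⟩ := hδ
  set φ := Ideal.Quotient.mk (Ideal.span {gen k n}) with hφ
  -- basic nonvanishing facts
  have hCzero : ∀ a : MvPolynomial (Fin 2) k, φ (Polynomial.C a) = 0 → a = 0 := by
    intro a h
    exact memI_C hn a (by rwa [hφ, Ideal.Quotient.eq_zero_iff_mem] at h)
  have hx : φ (Polynomial.C (X 0)) ≠ 0 := fun h => X_ne_zero 0 (hCzero _ h)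
  have hy : φ (Polynomial.C (X 1)) ≠ 0 := fun h => X_ne_zero 1 (hCzero _ h)
  have hx1 : φ (Polynomial.C (X 0)) - 1 ≠ 0 := by
    intro h
    have h2 : φ (Polynomial.C ((X 0 : MvPolynomial (Fin 2) k) - 1)) = 0 := by
      rw [Polynomial.C_sub, map_sub, Polynomial.C_1, map_one]; exact h
    have h3 := congrArg constantCoeff (hCzero _ h2)
    simp at h3
  have hxny : φ (Polynomial.C (X 0)) ^ n * φ (Polynomial.C (X 1)) - 1 ≠ 0 := by
    intro h
    have h2 : φ (Polynomial.C ((X 0 : MvPolynomial (Fin 2) k) ^ n * X 1 - 1)) = 0 := by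
      rw [Polynomial.C_sub, Polynomial.C_mul, Polynomial.C_pow, Polynomial.C_1,
        map_sub, map_mul, map_pow, map_one]
      exact h
    exact a_ne hn (hCzero _ h2)
  have hu1 : φ Polynomial.X - 1 ≠ 0 := by
    intro h
    have h2 : φ (Polynomial.X - 1) = 0 := by rw [map_sub, map_one]; exact h
    rw [hφ, Ideal.Quotient.eq_zero_iff_mem] at h2
    exact not_Xsub1_mem hn h2
  have huy : φ Polynomial.X * φ (Polynomial.C (X 1)) - 1 ≠ 0 := by
    intro h
    have h2 : φ (Polynomial.C (X 1) * Polynomial.X - 1) = 0 := by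
      rw [map_sub, map_mul, map_one]; linear_combination h
    rw [hφ, Ideal.Quotient.eq_zero_iff_mem] at h2
    exact not_uy_mem hn h2
  -- the defining relation
  have hrel : φ Polynomial.X *
      (φ (Polynomial.C (X 0)) ^ n * φ (Polynomial.C (X 1)) - 1) =
      φ (Polynomial.C (X 0)) - 1 := by
    have h0 : φ (Polynomial.C ((X 0) ^ n * X 1 - 1) * Polynomial.X - Polynomial.C ((X 0) - 1)) = 0 := by
      rw [hφ, Ideal.Quotient.eq_zero_iff_mem]
      exact Ideal.subset_span rfl
    simp only [Polynomial.C_sub, Polynomial.C_mul, Polynomial.C_pow, Polynomial.C_1,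
      map_sub, map_mul, map_pow, map_one] at h0
    linear_combination h0
  -- core: the generators have degree zero
  obtain ⟨hxd, hyd, hud⟩ := core_deg δ hbot hmul hadd n hn
    (φ (Polynomial.C (X 0))) (φ (Polynomial.C (X 1))) (φ Polynomial.X)
    hrel hx hy hx1 hxny (fun _ => hu1) (fun _ => huy)
  -- generation: every element has degree ≤ 0
  have hnt : Nontrivial (Polynomial (MvPolynomial (Fin 2) k) ⧸ Ideal.span {gen k n}) :=
    nontrivial_of_ne _ 0 hx
  have h1Q := deg_one_eq_zero δ hbot hmul
  have hPadd : ∀ f g, δ f ≤ 0 → δ g ≤ 0 → δ (f + g) ≤ 0 :=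
    fun f g h1 h2 => (hadd f g).trans (max_le h1 h2)
  have hPmul : ∀ f g, δ f ≤ 0 → δ g ≤ 0 → δ (f * g) ≤ 0 := by
    intro f g h1 h2
    rw [hmul]
    calc δ f + δ g ≤ 0 + 0 := add_le_add h1 h2
    _ = 0 := add_zero 0
  have hPpow : ∀ m : ℕ, δ (φ Polynomial.X ^ m) ≤ 0 := by
    intro m
    induction m with
    | zero => rw [pow_zero, h1Q]
    | succ m ih => rw [pow_succ]; exact hPmul _ _ ih (le_of_eq hud)
  have hPC : ∀ r : k, δ (φ (Polynomial.C (C r))) ≤ 0 := by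
    intro r
    rcases eq_or_ne r 0 with rfl | hr
    · rw [show (C (0:k)) = (0 : MvPolynomial (Fin 2) k) by simp, Polynomial.C_0, map_zero,
        (hbot _).mpr rfl]
      exact bot_le
    · apply deg_le_of_mul_eq_one δ hbot hmul (g := φ (Polynomial.C (C r⁻¹)))
      rw [← map_mul, ← Polynomial.C_mul, ← C_mul, mul_inv_cancel₀ hr, C_1, Polynomial.C_1,
        map_one]
  have hallC : ∀ a : MvPolynomial (Fin 2) k, δ (φ (Polynomial.C a)) ≤ 0 := by
    intro a
    induction a using MvPolynomial.induction_on with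
    | C r => exact hPC r
    | add p q hp hq => rw [Polynomial.C_add, map_add]; exact hPadd _ _ hp hq
    | mul_X p i hp =>
      rw [Polynomial.C_mul, map_mul]
      refine hPmul _ _ hp ?_
      fin_cases i
      · exact le_of_eq hxd
      · exact le_of_eq hyd
  have hall : ∀ p : Polynomial (MvPolynomial (Fin 2) k), δ (φ p) ≤ 0 := by
    intro p
    induction p using Polynomial.induction_on' with
    | add p q hp hq => rw [map_add]; exact hPadd _ _ hp hq
    | monomial m a =>
      rw [← Polynomial.C_mul_X_pow_eq_monomial, map_mul, map_pow]
      exact hPmul _ _ (hallC a) (hPpow m)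
  -- conclude
  obtain ⟨p, rfl⟩ := Ideal.Quotient.mk_surjective f
  have hle := hall p
  obtain ⟨m, hm⟩ := WithBot.ne_bot_iff_exists.mp (show δ (φ p) ≠ ⊥ by rw [Ne, hbot]; exact hf)
  rw [← hm, ← WithBot.coe_zero] at hle
  rw [← hm, show m = 0 from Nat.le_zero.mp (WithBot.coe_le_coe.mp hle)]
  exact WithBot.coe_zero
end

section
/- Let k be a field, A = k[x,y], and for n ≥ 1 let a = x^n y - 1. Then the localization A_a[x⁻¹] = k[x, x⁻¹, y, (x^n y - 1)⁻¹] is isomorphic as a k-algebra to the Laurent polynomial ring in two variables k[s, s⁻¹, t, t⁻¹]. -/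
open MvPolynomial

section Stmt19Aux

open AddMonoidAlgebra

noncomputable section

variable (k : Type*) [Field k] (n : ℕ)

/-- The map k[x,y] → k[ℤ×ℤ], x ↦ s, y ↦ s^{-n}(t+1). -/
def stmt19φ : MvPolynomial (Fin 2) k →ₐ[k] AddMonoidAlgebra k (ℤ × ℤ) :=
  MvPolynomial.aeval
    ![AddMonoidAlgebra.single ((1:ℤ), (0:ℤ)) (1:k),
      AddMonoidAlgebra.single ((-(n:ℤ)), (0:ℤ)) (1:k) *
        (AddMonoidAlgebra.single ((0:ℤ), (1:ℤ)) (1:k) + 1)]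

lemma stmt19_single_pow (g : ℤ × ℤ) (m : ℕ) :
    (AddMonoidAlgebra.single g (1:k)) ^ m = AddMonoidAlgebra.single (m • g) (1:k) := by
  simp [AddMonoidAlgebra.single_pow]

lemma stmt19φ_X0 : stmt19φ k n (X 0) = AddMonoidAlgebra.single ((1:ℤ), (0:ℤ)) (1:k) := by
  simp [stmt19φ]

lemma stmt19φ_X1 : stmt19φ k n (X 1) =
    AddMonoidAlgebra.single ((-(n:ℤ)), (0:ℤ)) (1:k) *
      (AddMonoidAlgebra.single ((0:ℤ), (1:ℤ)) (1:k) + 1) := by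
  simp [stmt19φ]

lemma stmt19φ_X0_pow (m : ℕ) :
    stmt19φ k n (X 0 ^ m) = AddMonoidAlgebra.single (((m:ℤ)), (0:ℤ)) (1:k) := by
  rw [map_pow, stmt19φ_X0, stmt19_single_pow]
  norm_num

lemma stmt19φ_a :
    stmt19φ k n (X 0 ^ n * X 1 - 1) = AddMonoidAlgebra.single ((0:ℤ), (1:ℤ)) (1:k) := by
  rw [map_sub, map_one, map_mul, stmt19φ_X0_pow, stmt19φ_X1, ← mul_assoc,
    AddMonoidAlgebra.single_mul_single]
  norm_num
  rw [show ((0:ℤ),(0:ℤ)) = (0 : ℤ × ℤ) from rfl, ← AddMonoidAlgebra.one_def, one_mul, add_sub_cancel_right]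

lemma stmt19φ_a_pow (m : ℕ) :
    stmt19φ k n ((X 0 ^ n * X 1 - 1) ^ m)
      = AddMonoidAlgebra.single ((0:ℤ), ((m:ℤ))) (1:k) := by
  rw [map_pow, stmt19φ_a, stmt19_single_pow]
  norm_num

local notation "A" => MvPolynomial (Fin 2) k
local notation "F" => FractionRing (MvPolynomial (Fin 2) k)

lemma stmt19_a_ne_zero : (X 0 ^ n * X 1 - 1 : A) ≠ 0 := by
  intro h
  have := congrArg (MvPolynomial.constantCoeff) h
  simp at this

lemma stmt19_xF_ne : (algebraMap A F) (X 0) ≠ 0 := by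
  simp only [ne_eq, map_eq_zero_iff _ (IsFractionRing.injective A F)]
  exact X_ne_zero 0

lemma stmt19_aF_ne : (algebraMap A F) (X 0 ^ n * X 1 - 1) ≠ 0 := by
  simp only [ne_eq, map_eq_zero_iff _ (IsFractionRing.injective A F)]
  exact stmt19_a_ne_zero k n

/-- group hom (ℤ×ℤ) → Fˣ essentially, into F. -/
def stmt19χ : Multiplicative (ℤ × ℤ) →* F where
  toFun g := (algebraMap A F) (X 0) ^ (g.toAdd.1) *
    (algebraMap A F) (X 0 ^ n * X 1 - 1) ^ (g.toAdd.2)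
  map_one' := by simp
  map_mul' g h := by
    simp only [toAdd_mul, Prod.fst_add, Prod.snd_add,
      zpow_add₀ (stmt19_xF_ne k), zpow_add₀ (stmt19_aF_ne k n)]
    ring

def stmt19ψ : AddMonoidAlgebra k (ℤ × ℤ) →ₐ[k] F :=
  AddMonoidAlgebra.lift k F (ℤ × ℤ) (stmt19χ k n)

lemma stmt19ψ_single (g : ℤ × ℤ) (r : k) :
    stmt19ψ k n (AddMonoidAlgebra.single g r) = r • stmt19χ k n (Multiplicative.ofAdd g) := by
  simp [stmt19ψ, AddMonoidAlgebra.lift_single]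

lemma stmt19_comp : (stmt19ψ k n).comp (stmt19φ k n) =
    IsScalarTower.toAlgHom k (MvPolynomial (Fin 2) k) F := by
  apply MvPolynomial.algHom_ext
  intro i
  fin_cases i
  · show stmt19ψ k n (stmt19φ k n (X 0)) = _
    rw [stmt19φ_X0, stmt19ψ_single, one_smul]
    simp [stmt19χ]
  · show stmt19ψ k n (stmt19φ k n (X 1)) = _
    rw [stmt19φ_X1, map_mul, map_add, map_one, stmt19ψ_single, stmt19ψ_single, one_smul,
      one_smul]
    simp only [stmt19χ, MonoidHom.coe_mk, OneHom.coe_mk, toAdd_ofAdd,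
      IsScalarTower.toAlgHom_apply]
    show _ = (algebraMap _ _) (X 1)
    simp only [zpow_zero, mul_one, one_mul, zpow_one, zpow_neg, zpow_natCast]
    rw [map_sub, map_one, sub_add_cancel, map_mul, map_pow]
    rw [inv_mul_cancel_left₀ (pow_ne_zero _ (stmt19_xF_ne k))]

lemma stmt19φ_injective : Function.Injective (stmt19φ k n) := by
  have h : ∀ p : MvPolynomial (Fin 2) k, stmt19ψ k n (stmt19φ k n p) =
      algebraMap (MvPolynomial (Fin 2) k) (FractionRing (MvPolynomial (Fin 2) k)) p := fun p =>
    DFunLike.congr_fun (stmt19_comp k n) p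
  intro p q hpq
  apply IsFractionRing.injective (MvPolynomial (Fin 2) k) F
  rw [← h, ← h, hpq]


lemma stmt19_isUnit_single (g : ℤ × ℤ) : IsUnit (AddMonoidAlgebra.single g (1:k)) :=
  IsUnit.of_mul_eq_one (AddMonoidAlgebra.single (-g) (1:k)) (by
    rw [AddMonoidAlgebra.single_mul_single]
    simp [← AddMonoidAlgebra.one_def])

local notation "S" => Submonoid.closure {(X 0 : MvPolynomial (Fin 2) k) ^ n * X 1 - 1, X 0}

lemma stmt19_map_units : ∀ s ∈ S, IsUnit (stmt19φ k n s) := by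
  intro s hs
  induction hs using Submonoid.closure_induction with
  | mem y hy =>
    rcases hy with hy | hy
    · rw [hy, stmt19φ_a]; exact stmt19_isUnit_single k _
    · rw [Set.mem_singleton_iff.mp hy, stmt19φ_X0]; exact stmt19_isUnit_single k _
  | one => simp
  | mul a b _ _ ha hb => rw [map_mul]; exact ha.mul hb

lemma stmt19_surj_single (g : ℤ × ℤ) (r : k) :
    ∃ p, ∃ m ∈ S, AddMonoidAlgebra.single g r * stmt19φ k n m = stmt19φ k n p := by
  have h1 : ((g.1 + g.1.natAbs).toNat : ℤ) = g.1 + g.1.natAbs := by omega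
  have h2 : ((g.2 + g.2.natAbs).toNat : ℤ) = g.2 + g.2.natAbs := by omega
  refine ⟨C r * X 0 ^ (g.1 + (g.1.natAbs : ℤ)).toNat *
      ((X 0 : MvPolynomial (Fin 2) k) ^ n * X 1 - 1) ^ (g.2 + (g.2.natAbs : ℤ)).toNat,
    X 0 ^ g.1.natAbs * ((X 0 : MvPolynomial (Fin 2) k) ^ n * X 1 - 1) ^ g.2.natAbs,
    mul_mem (pow_mem (Submonoid.subset_closure (by simp)) _)
      (pow_mem (Submonoid.subset_closure (by simp)) _), ?_⟩
  rw [map_mul, map_mul, map_mul, stmt19φ_X0_pow, stmt19φ_a_pow, stmt19φ_X0_pow, stmt19φ_a_pow]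
  have hC : stmt19φ k n (C r) = AddMonoidAlgebra.single ((0:ℤ),(0:ℤ)) r := by
    rw [stmt19φ, aeval_C]
    simp [AddMonoidAlgebra.coe_algebraMap]
    rfl
  rw [hC]
  simp only [AddMonoidAlgebra.single_mul_single, Prod.mk_add_mk, mul_one, one_mul]
  congr 1
  show (_, _) = ((_:ℤ), (_:ℤ))
  rw [Prod.mk.injEq]
  constructor <;> omega

lemma stmt19_surj (z : AddMonoidAlgebra k (ℤ × ℤ)) :
    ∃ p, ∃ m ∈ S, z * stmt19φ k n m = stmt19φ k n p := by
  induction z using AddMonoidAlgebra.induction with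
  | zero => exact ⟨0, 1, one_mem _, by simp⟩
  | single_add g r f _ _ ih =>
    obtain ⟨p1, m1, hm1, h1⟩ := stmt19_surj_single k n g r
    obtain ⟨p2, m2, hm2, h2⟩ := ih
    refine ⟨p1 * m2 + p2 * m1, m1 * m2, mul_mem hm1 hm2, ?_⟩
    rw [map_add, map_mul, map_mul, map_mul, ← h1, ← h2]
    ring


end


end Stmt19Aux

/-- Let `A = k[x,y]` and, for `n ≥ 1`, `a = xⁿy - 1`. The localization
`A_a[x⁻¹] = k[x, x⁻¹, y, (xⁿy-1)⁻¹]` (localization of `A` at the multiplicative set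
generated by `a` and `x`) is isomorphic as a `k`-algebra to the Laurent polynomial
ring in two variables, i.e. the group algebra `k[ℤ × ℤ]`. Here `x = X 0`, `y = X 1`. -/
theorem stmt_19 (k : Type*) [Field k] (n : ℕ) (hn : 1 ≤ n)
    (L : Type*) [CommRing L] [Algebra (MvPolynomial (Fin 2) k) L]
    [IsLocalization
      (Submonoid.closure {(X 0 : MvPolynomial (Fin 2) k) ^ n * X 1 - 1, X 0}) L]
    [Algebra k L] [IsScalarTower k (MvPolynomial (Fin 2) k) L] :
    Nonempty (L ≃ₐ[k] AddMonoidAlgebra k (ℤ × ℤ)) := by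
  letI : Algebra (MvPolynomial (Fin 2) k) (AddMonoidAlgebra k (ℤ × ℤ)) :=
    (stmt19φ k n).toRingHom.toAlgebra
  haveI : IsScalarTower k (MvPolynomial (Fin 2) k) (AddMonoidAlgebra k (ℤ × ℤ)) :=
    IsScalarTower.of_algebraMap_eq' ((stmt19φ k n).comp_algebraMap).symm
  haveI : IsLocalization
      (Submonoid.closure {(X 0 : MvPolynomial (Fin 2) k) ^ n * X 1 - 1, X 0})
      (AddMonoidAlgebra k (ℤ × ℤ)) := by
    refine { map_units := ?_, surj := ?_, exists_of_eq := ?_ }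
    · rintro ⟨s, hs⟩
      exact stmt19_map_units k n s hs
    · intro z
      obtain ⟨p, m, hm, h⟩ := stmt19_surj k n z
      exact ⟨(p, ⟨m, hm⟩), h⟩
    · intro p q h
      exact ⟨1, by rw [stmt19φ_injective k n h]⟩
  exact ⟨(IsLocalization.algEquiv
    (Submonoid.closure {(X 0 : MvPolynomial (Fin 2) k) ^ n * X 1 - 1, X 0}) L
    (AddMonoidAlgebra k (ℤ × ℤ))).restrictScalars k⟩
end
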